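/- arXiv:1201.0658 — 5 statements merged into one kernel-verified Lean document; each statement's English description precedes it below -/
import Mathlib

section
/- Let w, w̃ be positive non-decreasing weight functions with ∑ₙ 1/w(n) = ∞ and ∑ₙ 1/w̃(n) = ∞. If w(t) ≤ w̃(t) for all t, then α_c(w) ≥ α_c(w̃). -/
open MeasureTheory Filter Topology Set
open scoped ENNReal NNReal

noncomputable section

/-- Extension of a weight sequence to the reals: `w(t) = w(⌊t⌋)` (and `w 0` for `t < 0`). -/
def wext (w : ℕ → ℝ) (t : ℝ) : ℝ := w ⌊t⌋₊

/-- `W(t) = ∫₀ᵗ du / w(u)`. -/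
def Wfun (v : ℝ → ℝ) (t : ℝ) : ℝ := ∫ u in (0:ℝ)..t, (v u)⁻¹

/-- `I_α(w) = ∫₀^∞ dx / w(W⁻¹(W(x)+α))`, valued in `[0,∞]`. -/
def Ia (v : ℝ → ℝ) (Winv : ℝ → ℝ) (α : ℝ) : ℝ≥0∞ :=
  ∫⁻ x in Ioi (0:ℝ), ENNReal.ofReal (v (Winv (Wfun v x + α)))⁻¹

/-- The critical parameter `α_c(w) = inf {α ≥ 0 : I_α(w) < ∞} ∈ [0,∞]` (inf ∅ = ∞). -/
def alphac (v : ℝ → ℝ) (Winv : ℝ → ℝ) : ℝ≥0∞ :=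
  sInf (ENNReal.ofReal '' {α : ℝ | 0 < α ∧ Ia v Winv α < ⊤})

namespace Stmt3Aux

variable {w : ℕ → ℝ}

lemma wext_pos (hpos : ∀ n, 0 < w n) (u : ℝ) : 0 < wext w u := hpos _

lemma wext_mono (hmono : Monotone w) : Monotone (wext w) :=
  fun _ _ hab => hmono (Nat.floor_mono hab)

lemma inv_anti (hpos : ∀ n, 0 < w n) (hmono : Monotone w) :
    Antitone (fun u : ℝ => (wext w u)⁻¹) :=
  fun a b hab => inv_anti₀ (wext_pos hpos a) (wext_mono hmono hab)

lemma intble (hpos : ∀ n, 0 < w n) (hmono : Monotone w) (a b : ℝ) :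
    IntervalIntegrable (fun u : ℝ => (wext w u)⁻¹) volume a b :=
  (inv_anti hpos hmono).intervalIntegrable

lemma Wfun_zero (v : ℝ → ℝ) : Wfun v 0 = 0 := intervalIntegral.integral_same

lemma Wfun_sub (hpos : ∀ n, 0 < w n) (hmono : Monotone w) (x y : ℝ) :
    Wfun (wext w) y - Wfun (wext w) x = ∫ u in x..y, (wext w u)⁻¹ := by
  rw [Wfun, Wfun, ← intervalIntegral.integral_add_adjacent_intervals
    (intble hpos hmono 0 x) (intble hpos hmono x y)]
  ring

lemma Wfun_strictMono (hpos : ∀ n, 0 < w n) (hmono : Monotone w) :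
    StrictMono (Wfun (wext w)) := by
  intro a b hab
  have h := Wfun_sub hpos hmono a b
  have hpos' : 0 < ∫ u in a..b, (wext w u)⁻¹ :=
    intervalIntegral.intervalIntegral_pos_of_pos (intble hpos hmono a b)
      (fun u => inv_pos.mpr (wext_pos hpos u)) hab
  linarith

end Stmt3Aux

open Stmt3Aux in
/-- monotonicity: if `w ≤ w̃` pointwise then `α_c(w) ≥ α_c(w̃)`. -/
theorem stmt3 (w wt : ℕ → ℝ) (hpos : ∀ n, 0 < w n) (hposT : ∀ n, 0 < wt n)
    (hmono : Monotone w) (hmonoT : Monotone wt)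
    (hdiv : ¬ Summable (fun n : ℕ => (w n)⁻¹))
    (hdivT : ¬ Summable (fun n : ℕ => (wt n)⁻¹))
    (hle : ∀ n, w n ≤ wt n)
    (Winv WinvT : ℝ → ℝ)
    (hWinv : ∀ t : ℝ, 0 ≤ t → Winv (Wfun (wext w) t) = t)
    (hWinv' : ∀ y : ℝ, 0 ≤ y → Wfun (wext w) (Winv y) = y)
    (hWinvT : ∀ t : ℝ, 0 ≤ t → WinvT (Wfun (wext wt) t) = t)
    (hWinvT' : ∀ y : ℝ, 0 ≤ y → Wfun (wext wt) (WinvT y) = y) :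
    alphac (wext wt) WinvT ≤ alphac (wext w) Winv := by
  have hSM : StrictMono (Wfun (wext w)) := Wfun_strictMono hpos hmono
  have hSMT : StrictMono (Wfun (wext wt)) := Wfun_strictMono hposT hmonoT
  have hsub : {α : ℝ | 0 < α ∧ Ia (wext w) Winv α < ⊤} ⊆
      {α : ℝ | 0 < α ∧ Ia (wext wt) WinvT α < ⊤} := by
    rintro α ⟨hα, hIa⟩
    refine ⟨hα, lt_of_le_of_lt ?_ hIa⟩
    unfold Ia
    refine lintegral_mono_ae ((ae_restrict_iff' measurableSet_Ioi).mpr (ae_of_all _ ?_))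
    intro x hx
    have hx0 : (0:ℝ) ≤ x := (le_of_lt hx)
    -- basic positivity of W at x
    have hWx : 0 ≤ Wfun (wext w) x := by
      have := hSM.monotone hx0
      rwa [Wfun_zero] at this
    have hWxT : 0 ≤ Wfun (wext wt) x := by
      have := hSMT.monotone hx0
      rwa [Wfun_zero] at this
    set y := Winv (Wfun (wext w) x + α) with hy_def
    set z := WinvT (Wfun (wext wt) x + α) with hz_def
    have hWy : Wfun (wext w) y = Wfun (wext w) x + α :=
      hWinv' _ (by linarith)
    have hWzT : Wfun (wext wt) z = Wfun (wext wt) x + α :=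
      hWinvT' _ (by linarith)
    -- y ≥ x
    have hxy : x ≤ y := by
      have : Wfun (wext w) x ≤ Wfun (wext w) y := by rw [hWy]; linarith
      exact hSM.le_iff_le.mp this
    -- key comparison: W̃(y) ≤ W̃(x) + α
    have hcomp : Wfun (wext wt) y ≤ Wfun (wext wt) x + α := by
      have h1 : Wfun (wext wt) y - Wfun (wext wt) x = ∫ u in x..y, (wext wt u)⁻¹ :=
        Wfun_sub hposT hmonoT x y
      have h2 : Wfun (wext w) y - Wfun (wext w) x = ∫ u in x..y, (wext w u)⁻¹ :=
        Wfun_sub hpos hmono x y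
      have h3 : (∫ u in x..y, (wext wt u)⁻¹) ≤ ∫ u in x..y, (wext w u)⁻¹ :=
        intervalIntegral.integral_mono_on hxy (intble hposT hmonoT x y)
          (intble hpos hmono x y)
          (fun u _ => inv_anti₀ (wext_pos hpos u) (hle _))
      have h4 : Wfun (wext w) y - Wfun (wext w) x = α := by rw [hWy]; ring
      linarith
    -- y ≤ z
    have hyz : y ≤ z := by
      have : Wfun (wext wt) y ≤ Wfun (wext wt) z := by rw [hWzT]; linarith
      exact hSMT.le_iff_le.mp this
    -- conclude
    have hchain : wext w y ≤ wext wt z :=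
      le_trans (hle _) (wext_mono hmonoT hyz)
    exact ENNReal.ofReal_le_ofReal
      (inv_anti₀ (wext_pos hpos y) hchain)
  exact sInf_le_sInf (image_mono hsub)
end
end

section
/- Let w, w̃ be positive non-decreasing weight functions with diverging sums ∑ 1/w(n) = ∑ 1/w̃(n) = ∞, and suppose w(x) = w̃(x) for all x ≥ x₀ for some x₀ ≥ 0. Then α_c(w) = α_c(w̃). -/
open MeasureTheory Filter Topology Set
open scoped ENNReal NNReal

noncomputable section

namespace Stmt5Aux

variable {w : ℕ → ℝ}

lemma wext_mono (hmono : Monotone w) : Monotone (wext w) :=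
  fun _ _ h => hmono (Nat.floor_mono h)

lemma inv_wext_anti (hpos : ∀ n, 0 < w n) (hmono : Monotone w) :
    Antitone (fun u => (wext w u)⁻¹) :=
  fun _ _ h => inv_anti₀ (hpos _) (wext_mono hmono h)

lemma wii (hpos : ∀ n, 0 < w n) (hmono : Monotone w) (a b : ℝ) :
    IntervalIntegrable (fun u => (wext w u)⁻¹) volume a b :=
  (inv_wext_anti hpos hmono).intervalIntegrable

lemma Wfun_sub (hpos : ∀ n, 0 < w n) (hmono : Monotone w) (a b : ℝ) :
    Wfun (wext w) b = Wfun (wext w) a + ∫ u in a..b, (wext w u)⁻¹ :=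
  (intervalIntegral.integral_add_adjacent_intervals (wii hpos hmono 0 a)
    (wii hpos hmono a b)).symm

lemma Wfun_nonneg (hpos : ∀ n, 0 < w n) {t : ℝ} (ht : 0 ≤ t) :
    0 ≤ Wfun (wext w) t :=
  intervalIntegral.integral_nonneg ht (fun u _ => inv_nonneg.2 (hpos _).le)

lemma Wfun_nonpos (hpos : ∀ n, 0 < w n) {t : ℝ} (ht : t ≤ 0) :
    Wfun (wext w) t ≤ 0 := by
  have h : 0 ≤ ∫ u in t..(0:ℝ), (wext w u)⁻¹ :=
    intervalIntegral.integral_nonneg ht (fun u _ => inv_nonneg.2 (hpos _).le)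
  have hs : Wfun (wext w) t = -∫ u in t..(0:ℝ), (wext w u)⁻¹ :=
    intervalIntegral.integral_symm t 0
  linarith

lemma Wfun_strictMono (hpos : ∀ n, 0 < w n) (hmono : Monotone w) :
    StrictMono (Wfun (wext w)) := by
  intro a b hab
  have h := intervalIntegral.intervalIntegral_pos_of_pos_on (wii hpos hmono a b)
    (fun x _ => inv_pos.2 (hpos _)) hab
  have h2 := Wfun_sub hpos hmono a b
  linarith

/-- Finiteness of `I_α` is determined by the tail integral beyond `x₀`. -/
lemma Ia_lt_top_iff_tail (v Winv : ℝ → ℝ) (α : ℝ) (x₀ : ℝ) (hx₀ : 0 ≤ x₀)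
    (C : ℝ≥0∞) (hC : C ≠ ⊤)
    (hb : ∀ x, ENNReal.ofReal (v (Winv (Wfun v x + α)))⁻¹ ≤ C) :
    Ia v Winv α < ⊤ ↔
      (∫⁻ x in Ioi x₀, ENNReal.ofReal (v (Winv (Wfun v x + α)))⁻¹) < ⊤ := by
  unfold Ia
  rw [← Ioc_union_Ioi_eq_Ioi hx₀,
    lintegral_union measurableSet_Ioi (Ioc_disjoint_Ioi le_rfl)]
  have h1 : (∫⁻ x in Ioc 0 x₀, ENNReal.ofReal (v (Winv (Wfun v x + α)))⁻¹) < ⊤ := by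
    calc (∫⁻ x in Ioc 0 x₀, ENNReal.ofReal (v (Winv (Wfun v x + α)))⁻¹)
        ≤ ∫⁻ _ in Ioc 0 x₀, C := lintegral_mono fun x => hb x
      _ = C * volume (Ioc 0 x₀) := setLIntegral_const _ _
      _ < ⊤ := ENNReal.mul_lt_top hC.lt_top measure_Ioc_lt_top
  simp [ENNReal.add_lt_top, h1]

end Stmt5Aux

open Stmt5Aux in
/-- if `w = w̃` from some point `x₀` on, then `α_c(w) = α_c(w̃)`. -/
theorem stmt5 (w wt : ℕ → ℝ) (hpos : ∀ n, 0 < w n) (hposT : ∀ n, 0 < wt n)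
    (hmono : Monotone w) (hmonoT : Monotone wt)
    (hdiv : ¬ Summable (fun n : ℕ => (w n)⁻¹))
    (hdivT : ¬ Summable (fun n : ℕ => (wt n)⁻¹))
    (x₀ : ℕ) (heq : ∀ n : ℕ, x₀ ≤ n → w n = wt n)
    (Winv WinvT : ℝ → ℝ)
    (hWinv : ∀ t : ℝ, 0 ≤ t → Winv (Wfun (wext w) t) = t)
    (hWinv' : ∀ y : ℝ, 0 ≤ y → Wfun (wext w) (Winv y) = y)
    (hWinvT : ∀ t : ℝ, 0 ≤ t → WinvT (Wfun (wext wt) t) = t)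
    (hWinvT' : ∀ y : ℝ, 0 ≤ y → Wfun (wext wt) (WinvT y) = y) :
    alphac (wext w) Winv = alphac (wext wt) WinvT := by
  -- the two extended weights agree beyond `x₀`
  have heqext : ∀ u : ℝ, (x₀ : ℝ) ≤ u → wext w u = wext wt u := by
    intro u hu
    exact heq _ (Nat.le_floor hu)
  -- the two `W` functions differ by a constant beyond `x₀`
  have hshift : ∀ t : ℝ, (x₀ : ℝ) ≤ t →
      Wfun (wext w) t - Wfun (wext w) x₀ = Wfun (wext wt) t - Wfun (wext wt) x₀ := by
    intro t ht
    have hint : (∫ u in (x₀ : ℝ)..t, (wext w u)⁻¹) = ∫ u in (x₀ : ℝ)..t, (wext wt u)⁻¹ := by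
      refine intervalIntegral.integral_congr (fun u hu => ?_)
      rw [uIcc_of_le ht] at hu
      rw [heqext u hu.1]
    have h1 := Wfun_sub hpos hmono (x₀ : ℝ) t
    have h2 := Wfun_sub hposT hmonoT (x₀ : ℝ) t
    rw [h1, h2, hint]; ring
  -- pointwise equality of the two integrands beyond `x₀`
  have key : ∀ α : ℝ, 0 < α → ∀ x : ℝ, (x₀ : ℝ) < x →
      (wext w (Winv (Wfun (wext w) x + α)))⁻¹
        = (wext wt (WinvT (Wfun (wext wt) x + α)))⁻¹ := by
    intro α hα x hx
    have hx0 : (0 : ℝ) ≤ x := le_trans (Nat.cast_nonneg _) hx.le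
    have hWx : 0 ≤ Wfun (wext w) x := Wfun_nonneg hpos hx0
    have hWxα : 0 ≤ Wfun (wext w) x + α := by linarith
    set y := Winv (Wfun (wext w) x + α) with hy
    have hWy : Wfun (wext w) y = Wfun (wext w) x + α := hWinv' _ hWxα
    have hy0 : 0 ≤ y := by
      by_contra h
      push_neg at h
      have := Wfun_nonpos hpos (w := w) h.le
      linarith
    have hyx : x ≤ y := by
      by_contra h
      push_neg at h
      have := (Wfun_strictMono hpos hmono) h
      linarith
    have hyx₀ : (x₀ : ℝ) ≤ y := le_trans hx.le hyx
    have hWty : Wfun (wext wt) y = Wfun (wext wt) x + α := by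
      have h1 := hshift y hyx₀
      have h2 := hshift x hx.le
      linarith
    have hT : WinvT (Wfun (wext wt) x + α) = y := by
      rw [← hWty]; exact hWinvT y hy0
    rw [hT, heqext y hyx₀]
  -- hence the tail integrals coincide
  have htail : ∀ α : ℝ, 0 < α →
      (∫⁻ x in Ioi ((x₀ : ℝ)), ENNReal.ofReal (wext w (Winv (Wfun (wext w) x + α)))⁻¹)
        = ∫⁻ x in Ioi ((x₀ : ℝ)), ENNReal.ofReal (wext wt (WinvT (Wfun (wext wt) x + α)))⁻¹ := by
    intro α hα
    exact setLIntegral_congr_fun measurableSet_Ioi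
      (fun x hx => by simp only [key α hα x hx])
  -- bounds on the integrands
  have hbw : ∀ x : ℝ, (w 0 : ℝ)⁻¹ ≥ (wext w x)⁻¹ := fun x =>
    inv_anti₀ (hpos 0) (hmono (Nat.zero_le _))
  have hbwt : ∀ x : ℝ, (wt 0 : ℝ)⁻¹ ≥ (wext wt x)⁻¹ := fun x =>
    inv_anti₀ (hposT 0) (hmonoT (Nat.zero_le _))
  -- the main finiteness equivalence
  have main : ∀ α : ℝ, 0 < α →
      (Ia (wext w) Winv α < ⊤ ↔ Ia (wext wt) WinvT α < ⊤) := by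
    intro α hα
    rw [Ia_lt_top_iff_tail (wext w) Winv α (x₀ : ℝ) (Nat.cast_nonneg _)
        (ENNReal.ofReal (w 0)⁻¹) ENNReal.ofReal_ne_top
        (fun x => ENNReal.ofReal_le_ofReal (hbw _)),
      Ia_lt_top_iff_tail (wext wt) WinvT α (x₀ : ℝ) (Nat.cast_nonneg _)
        (ENNReal.ofReal (wt 0)⁻¹) ENNReal.ofReal_ne_top
        (fun x => ENNReal.ofReal_le_ofReal (hbwt _)),
      htail α hα]
  have hset : {α : ℝ | 0 < α ∧ Ia (wext w) Winv α < ⊤}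
      = {α : ℝ | 0 < α ∧ Ia (wext wt) WinvT α < ⊤} := by
    ext α
    simp only [mem_setOf_eq, and_congr_right_iff]
    exact fun hα => main α hα
  unfold alphac
  rw [hset]
end
end

section
/- Let w, w̃ be positive non-decreasing weight functions with diverging sums such that w(x)/w̃(x) → 1 as x → ∞. Then α_c(w) = α_c(w̃). -/
open MeasureTheory Filter Topology Set
open scoped ENNReal NNReal

noncomputable section

variable {w : ℕ → ℝ}

lemma wext_mono (hmono : Monotone w) : Monotone (wext w) :=
  fun _ _ h => hmono (Nat.floor_mono h)

lemma wext_inv_antitone (hpos : ∀ n, 0 < w n) (hmono : Monotone w) :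
    Antitone (fun u => (wext w u)⁻¹) := by
  intro a b hab
  have h1 : 0 < wext w a := hpos _
  exact inv_anti₀ h1 (wext_mono hmono hab)

lemma wext_intInt (hpos : ∀ n, 0 < w n) (hmono : Monotone w) (a b : ℝ) :
    IntervalIntegrable (fun u => (wext w u)⁻¹) volume a b :=
  (wext_inv_antitone hpos hmono).intervalIntegrable

lemma Wfun_add (hpos : ∀ n, 0 < w n) (hmono : Monotone w) (a b : ℝ) :
    Wfun (wext w) b = Wfun (wext w) a + ∫ u in a..b, (wext w u)⁻¹ := by
  rw [Wfun, Wfun, intervalIntegral.integral_add_adjacent_intervals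
    (wext_intInt hpos hmono 0 a) (wext_intInt hpos hmono a b)]

lemma Wfun_strictMono (hpos : ∀ n, 0 < w n) (hmono : Monotone w) :
    StrictMono (Wfun (wext w)) := by
  intro a b hab
  rw [Wfun_add hpos hmono a b]
  have : 0 < ∫ u in a..b, (wext w u)⁻¹ :=
    intervalIntegral.intervalIntegral_pos_of_pos (wext_intInt hpos hmono a b)
      (fun x => inv_pos.mpr (hpos _)) hab
  linarith

lemma Wfun_nonneg (hpos : ∀ n, 0 < w n) (hmono : Monotone w) {t : ℝ} (ht : 0 ≤ t) :
    0 ≤ Wfun (wext w) t := by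
  rw [Wfun]
  exact intervalIntegral.integral_nonneg ht (fun u _ => le_of_lt (inv_pos.mpr (hpos _)))


lemma key_pointwise (w wt : ℕ → ℝ) (hpos : ∀ n, 0 < w n) (hposT : ∀ n, 0 < wt n)
    (hmono : Monotone w) (hmonoT : Monotone wt)
    (Winv WinvT : ℝ → ℝ)
    (hWinv' : ∀ y : ℝ, 0 ≤ y → Wfun (wext w) (Winv y) = y)
    (hWinvT' : ∀ y : ℝ, 0 ≤ y → Wfun (wext wt) (WinvT y) = y)
    (c : ℝ) (hc : 1 ≤ c) (N : ℕ) (hdom : ∀ n, N ≤ n → w n ≤ c * wt n)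
    (α : ℝ) (hα : 0 ≤ α) (x : ℝ) (hx : (N:ℝ) ≤ x) :
    (wext wt (WinvT (Wfun (wext wt) x + c * α)))⁻¹
      ≤ c * (wext w (Winv (Wfun (wext w) x + α)))⁻¹ := by
  have hc0 : (0:ℝ) < c := lt_of_lt_of_le one_pos hc
  have h0x : (0:ℝ) ≤ x := le_trans (Nat.cast_nonneg N) hx
  set g := Winv (Wfun (wext w) x + α) with hgdef
  set g' := WinvT (Wfun (wext wt) x + c * α) with hg'def
  have hWx : 0 ≤ Wfun (wext w) x := Wfun_nonneg hpos hmono h0x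
  have hWx' : 0 ≤ Wfun (wext wt) x := Wfun_nonneg hposT hmonoT h0x
  have hg : Wfun (wext w) g = Wfun (wext w) x + α :=
    hWinv' _ (by positivity)
  have hg' : Wfun (wext wt) g' = Wfun (wext wt) x + c * α :=
    hWinvT' _ (by positivity)
  -- x ≤ g and x ≤ g'
  have hxg : x ≤ g := by
    have := (Wfun_strictMono hpos hmono).le_iff_le (a := x) (b := g)
    rw [hg] at this; exact this.mp (by linarith)
  have hxg' : x ≤ g' := by
    have := (Wfun_strictMono hposT hmonoT).le_iff_le (a := x) (b := g')
    rw [hg'] at this; exact this.mp (by nlinarith)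
  -- real-level domination on [x, ∞)
  have hdomR : ∀ u : ℝ, x ≤ u → wext w u ≤ c * wext wt u := by
    intro u hu
    exact hdom _ (Nat.le_floor (le_trans hx hu))
  -- W_w(g') ≥ W_w(g)
  have hWg' : Wfun (wext w) x + α ≤ Wfun (wext w) g' := by
    have h1 : Wfun (wext w) g' = Wfun (wext w) x + ∫ u in x..g', (wext w u)⁻¹ :=
      Wfun_add hpos hmono x g'
    have h2 : Wfun (wext wt) g' = Wfun (wext wt) x + ∫ u in x..g', (wext wt u)⁻¹ :=
      Wfun_add hposT hmonoT x g'
    have h3 : (∫ u in x..g', c⁻¹ * (wext wt u)⁻¹) ≤ ∫ u in x..g', (wext w u)⁻¹ := by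
      apply intervalIntegral.integral_mono_on hxg'
        ((wext_intInt hposT hmonoT x g').const_mul _) (wext_intInt hpos hmono x g')
      intro u hu
      have hwu : 0 < wext w u := hpos _
      have hwtu : 0 < wext wt u := hposT _
      have hd := hdomR u hu.1
      rw [← mul_inv]
      exact inv_anti₀ hwu hd
    rw [intervalIntegral.integral_const_mul] at h3
    have h4 : ∫ u in x..g', (wext wt u)⁻¹ = c * α := by linarith
    rw [h4, inv_mul_cancel_left₀ (ne_of_gt hc0)] at h3
    linarith
  have hgg' : g ≤ g' := by
    have := (Wfun_strictMono hpos hmono).le_iff_le (a := g) (b := g')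
    rw [hg] at this; exact this.mp hWg'
  -- conclude
  have hgN : (N:ℝ) ≤ g := le_trans hx hxg
  have hdg : wext w g ≤ c * wext wt g := hdom _ (Nat.le_floor hgN)
  have h5 : wext wt g ≤ wext wt g' := wext_mono hmonoT hgg'
  have hwg : 0 < wext w g := hpos _
  have hwtg' : 0 < wext wt g' := hposT _
  rw [← one_div, ← one_div, mul_one_div, div_le_div_iff₀ hwtg' hwg]
  nlinarith

lemma Ia_le (w wt : ℕ → ℝ) (hpos : ∀ n, 0 < w n) (hposT : ∀ n, 0 < wt n)
    (hmono : Monotone w) (hmonoT : Monotone wt)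
    (Winv WinvT : ℝ → ℝ)
    (hWinv' : ∀ y : ℝ, 0 ≤ y → Wfun (wext w) (Winv y) = y)
    (hWinvT' : ∀ y : ℝ, 0 ≤ y → Wfun (wext wt) (WinvT y) = y)
    (c : ℝ) (hc : 1 ≤ c) (N : ℕ) (hdom : ∀ n, N ≤ n → w n ≤ c * wt n)
    (α : ℝ) (hα : 0 ≤ α) (hfin : Ia (wext w) Winv α < ⊤) :
    Ia (wext wt) WinvT (c * α) < ⊤ := by
  have hc0 : (0:ℝ) < c := lt_of_lt_of_le one_pos hc
  have hsplit : Ioi (0:ℝ) = Ioc (0:ℝ) (N:ℝ) ∪ Ioi (N:ℝ) :=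
    (Set.Ioc_union_Ioi_eq_Ioi (Nat.cast_nonneg N)).symm
  rw [Ia, hsplit, lintegral_union measurableSet_Ioi Set.Ioc_disjoint_Ioi_same]
  have hbound : ∀ x : ℝ, ENNReal.ofReal (wext wt (WinvT (Wfun (wext wt) x + c * α)))⁻¹
      ≤ ENNReal.ofReal (wt 0)⁻¹ := by
    intro x
    apply ENNReal.ofReal_le_ofReal
    exact inv_anti₀ (hposT 0) (hmonoT (Nat.zero_le _))
  have h1 : (∫⁻ x in Ioc (0:ℝ) (N:ℝ),
      ENNReal.ofReal (wext wt (WinvT (Wfun (wext wt) x + c * α)))⁻¹) < ⊤ := by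
    calc (∫⁻ x in Ioc (0:ℝ) (N:ℝ), ENNReal.ofReal (wext wt (WinvT (Wfun (wext wt) x + c * α)))⁻¹)
        ≤ ∫⁻ _ in Ioc (0:ℝ) (N:ℝ), ENNReal.ofReal (wt 0)⁻¹ :=
          lintegral_mono (fun x => hbound x)
      _ = ENNReal.ofReal (wt 0)⁻¹ * volume (Ioc (0:ℝ) (N:ℝ)) := by
          rw [setLIntegral_const]
      _ < ⊤ := by
          apply ENNReal.mul_lt_top ENNReal.ofReal_lt_top
          simp [Real.volume_Ioc]
  have h2 : (∫⁻ x in Ioi (N:ℝ),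
      ENNReal.ofReal (wext wt (WinvT (Wfun (wext wt) x + c * α)))⁻¹) < ⊤ := by
    have step : (∫⁻ x in Ioi (N:ℝ),
        ENNReal.ofReal (wext wt (WinvT (Wfun (wext wt) x + c * α)))⁻¹)
        ≤ ∫⁻ x in Ioi (N:ℝ),
          ENNReal.ofReal c * ENNReal.ofReal (wext w (Winv (Wfun (wext w) x + α)))⁻¹ := by
      apply setLIntegral_mono' measurableSet_Ioi
      intro x hx
      rw [← ENNReal.ofReal_mul (le_of_lt hc0)]
      exact ENNReal.ofReal_le_ofReal
        (key_pointwise w wt hpos hposT hmono hmonoT Winv WinvT hWinv' hWinvT'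
          c hc N hdom α hα x (le_of_lt hx))
    rw [lintegral_const_mul' _ _ ENNReal.ofReal_ne_top] at step
    have step2 : (∫⁻ x in Ioi (N:ℝ),
        ENNReal.ofReal (wext w (Winv (Wfun (wext w) x + α)))⁻¹) ≤ Ia (wext w) Winv α :=
      lintegral_mono_set (Set.Ioi_subset_Ioi (Nat.cast_nonneg N))
    calc _ ≤ ENNReal.ofReal c * ∫⁻ x in Ioi (N:ℝ),
            ENNReal.ofReal (wext w (Winv (Wfun (wext w) x + α)))⁻¹ := step
      _ ≤ ENNReal.ofReal c * Ia (wext w) Winv α := by gcongr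
      _ < ⊤ := ENNReal.mul_lt_top ENNReal.ofReal_lt_top hfin
  exact ENNReal.add_lt_top.mpr ⟨h1, h2⟩

lemma alphac_le (w wt : ℕ → ℝ) (hpos : ∀ n, 0 < w n) (hposT : ∀ n, 0 < wt n)
    (hmono : Monotone w) (hmonoT : Monotone wt)
    (Winv WinvT : ℝ → ℝ)
    (hWinv' : ∀ y : ℝ, 0 ≤ y → Wfun (wext w) (Winv y) = y)
    (hWinvT' : ∀ y : ℝ, 0 ≤ y → Wfun (wext wt) (WinvT y) = y)
    (c : ℝ) (hc : 1 ≤ c) (N : ℕ) (hdom : ∀ n, N ≤ n → w n ≤ c * wt n) :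
    alphac (wext wt) WinvT ≤ ENNReal.ofReal c * alphac (wext w) Winv := by
  have hc0 : (0:ℝ) < c := lt_of_lt_of_le one_pos hc
  have hne0 : ENNReal.ofReal c ≠ 0 := by simp [hc0, ENNReal.ofReal_eq_zero, not_le]
  unfold alphac
  rw [mul_comm, ← ENNReal.div_le_iff_le_mul (Or.inl hne0) (Or.inl ENNReal.ofReal_ne_top)]
  apply le_sInf
  rintro b ⟨β, ⟨hβ0, hβfin⟩, rfl⟩
  rw [ENNReal.div_le_iff_le_mul (Or.inl hne0) (Or.inl ENNReal.ofReal_ne_top)]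
  show sInf (ENNReal.ofReal '' {α : ℝ | 0 < α ∧ Ia (wext wt) WinvT α < ⊤}) ≤ _
  have hmem : ENNReal.ofReal (c * β) ∈
      ENNReal.ofReal '' {α : ℝ | 0 < α ∧ Ia (wext wt) WinvT α < ⊤} :=
    ⟨c * β, ⟨by positivity,
      Ia_le w wt hpos hposT hmono hmonoT Winv WinvT hWinv' hWinvT' c hc N hdom β
        (le_of_lt hβ0) hβfin⟩, rfl⟩
  calc sInf (ENNReal.ofReal '' {α : ℝ | 0 < α ∧ Ia (wext wt) WinvT α < ⊤})
      ≤ ENNReal.ofReal (c * β) := sInf_le hmem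
    _ = ENNReal.ofReal β * ENNReal.ofReal c := by
        rw [mul_comm c β, ENNReal.ofReal_mul (le_of_lt hβ0)]

lemma le_of_forall_ofReal_mul {A B : ℝ≥0∞}
    (h : ∀ c : ℝ, 1 < c → A ≤ ENNReal.ofReal c * B) : A ≤ B := by
  have h1 : Tendsto (fun n : ℕ => (1 + 1/((n:ℝ)+1))) atTop (nhds 1) := by
    simpa using tendsto_const_nhds.add (tendsto_one_div_add_atTop_nhds_zero_nat (𝕜 := ℝ))
  have h2 : Tendsto (fun n : ℕ => ENNReal.ofReal (1 + 1/((n:ℝ)+1)) * B) atTop (nhds B) := by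
    have h3 : Tendsto (fun n : ℕ => ENNReal.ofReal (1 + 1/((n:ℝ)+1))) atTop
        (nhds (ENNReal.ofReal 1)) := (ENNReal.continuous_ofReal.tendsto _).comp h1
    have h4 := ENNReal.Tendsto.mul_const (b := B) h3 (Or.inl (by simp))
    simpa using h4
  refine ge_of_tendsto' h2 (fun n => h _ ?_)
  have : 0 < 1/((n:ℝ)+1) := by positivity
  linarith


/-- asymptotic equivalence: if `w(x)/w̃(x) → 1` then `α_c(w) = α_c(w̃)`. -/
theorem stmt6 (w wt : ℕ → ℝ) (hpos : ∀ n, 0 < w n) (hposT : ∀ n, 0 < wt n)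
    (hmono : Monotone w) (hmonoT : Monotone wt)
    (hdiv : ¬ Summable (fun n : ℕ => (w n)⁻¹))
    (hdivT : ¬ Summable (fun n : ℕ => (wt n)⁻¹))
    (hequiv : Tendsto (fun n : ℕ => w n / wt n) atTop (nhds 1))
    (Winv WinvT : ℝ → ℝ)
    (hWinv : ∀ t : ℝ, 0 ≤ t → Winv (Wfun (wext w) t) = t)
    (hWinv' : ∀ y : ℝ, 0 ≤ y → Wfun (wext w) (Winv y) = y)
    (hWinvT : ∀ t : ℝ, 0 ≤ t → WinvT (Wfun (wext wt) t) = t)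
    (hWinvT' : ∀ y : ℝ, 0 ≤ y → Wfun (wext wt) (WinvT y) = y) :
    alphac (wext w) Winv = alphac (wext wt) WinvT := by
  apply le_antisymm
  · -- need wt n ≤ c * w n eventually
    apply le_of_forall_ofReal_mul
    intro c hc
    have hc0 : (0:ℝ) < c := lt_trans one_pos hc
    have hev : ∀ᶠ n in atTop, 1/c < w n / wt n :=
      hequiv.eventually_const_lt (by rw [div_lt_one hc0]; exact hc)
    obtain ⟨N, hN⟩ := eventually_atTop.mp hev
    refine alphac_le wt w hposT hpos hmonoT hmono WinvT Winv hWinvT' hWinv'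
      c (le_of_lt hc) N (fun n hn => ?_)
    have h := hN n hn
    rw [div_lt_div_iff₀ hc0 (hposT n)] at h
    nlinarith [hpos n, hposT n]
  · apply le_of_forall_ofReal_mul
    intro c hc
    have hev : ∀ᶠ n in atTop, w n / wt n < c := hequiv.eventually_lt_const hc
    obtain ⟨N, hN⟩ := eventually_atTop.mp hev
    refine alphac_le w wt hpos hposT hmono hmonoT Winv WinvT hWinv' hWinvT'
      c (le_of_lt hc) N (fun n hn => ?_)
    have h := hN n hn
    rw [div_lt_iff₀ (hposT n)] at h
    linarith
end
end

section
/- Let w be a positive non-decreasing weight function with diverging W. If liminf_{x→∞} w(x)/x < 1, then I₁(w) = ∞ (i.e., α_c(w) ≥ 1). -/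
open MeasureTheory Filter Topology Set
open scoped ENNReal NNReal

noncomputable section

/-- if `liminf_{x→∞} w(x)/x < 1` then `I₁(w) = ∞`. -/
theorem stmt10 (w : ℝ → ℝ) (hpos : ∀ x : ℝ, 0 ≤ x → 0 < w x)
    (hmono : MonotoneOn w (Ici (0:ℝ)))
    (hWdiv : Tendsto (Wfun w) atTop atTop)
    (Winv : ℝ → ℝ)
    (hWinv : ∀ t : ℝ, 0 ≤ t → Winv (Wfun w t) = t)
    (hWinv' : ∀ y : ℝ, 0 ≤ y → Wfun w (Winv y) = y)
    (hliminf : Filter.liminf (fun x : ℝ => ENNReal.ofReal (w x / x)) atTop < 1) :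
    Ia w Winv 1 = ⊤ := by
  classical
  set f : ℝ → ℝ≥0∞ := fun x => ENNReal.ofReal (w (Winv (Wfun w x + 1)))⁻¹ with hfdef
  -- integrability of the inverse weight
  have hInt : ∀ a b : ℝ, 0 ≤ a → a ≤ b →
      IntervalIntegrable (fun u => (w u)⁻¹) volume a b := by
    intro a b ha hab
    apply AntitoneOn.intervalIntegrable
    rw [uIcc_of_le hab]
    intro u hu v hv huv
    exact inv_anti₀ (hpos u (ha.trans hu.1))
      (hmono (ha.trans hu.1) (ha.trans hv.1) huv)
  have hW0 : Wfun w 0 = 0 := intervalIntegral.integral_same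
  have hWnonneg : ∀ t : ℝ, 0 ≤ t → 0 ≤ Wfun w t := by
    intro t ht
    exact intervalIntegral.integral_nonneg ht
      (fun u hu => inv_nonneg.2 (hpos u hu.1).le)
  have hgap : ∀ a b : ℝ, 0 ≤ a → a ≤ b →
      (b - a) * (w b)⁻¹ ≤ Wfun w b - Wfun w a := by
    intro a b ha hab
    have h1 : Wfun w b - Wfun w a = ∫ u in a..b, (w u)⁻¹ :=
      intervalIntegral.integral_interval_sub_left (hInt 0 b le_rfl (ha.trans hab))
        (hInt 0 a le_rfl ha)
    have h2 : ∫ u in a..b, (w b)⁻¹ ≤ ∫ u in a..b, (w u)⁻¹ := by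
      apply intervalIntegral.integral_mono_on hab (intervalIntegrable_const) (hInt a b ha hab)
      intro u hu
      exact inv_anti₀ (hpos u (ha.trans hu.1))
        (hmono (ha.trans hu.1) (ha.trans hab) hu.2)
    rw [h1]
    calc (b - a) * (w b)⁻¹ = ∫ u in a..b, (w b)⁻¹ := by
          rw [intervalIntegral.integral_const, smul_eq_mul]
      _ ≤ _ := h2
  have hWlt : ∀ a b : ℝ, 0 ≤ a → a < b → Wfun w a < Wfun w b := by
    intro a b ha hab
    have h := hgap a b ha hab.le
    have hp : 0 < (b - a) * (w b)⁻¹ :=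
      mul_pos (by linarith) (inv_pos.2 (hpos b (ha.trans hab.le)))
    linarith
  -- surjectivity of Wfun onto [0, ∞)
  have hsurj : ∀ y : ℝ, 0 ≤ y → ∃ s : ℝ, 0 ≤ s ∧ Wfun w s = y := by
    intro y hy
    obtain ⟨T, hTy, hT0⟩ :=
      ((hWdiv.eventually_ge_atTop y).and (eventually_ge_atTop (0:ℝ))).exists
    have hcont : ContinuousOn (Wfun w) (uIcc (0:ℝ) T) :=
      intervalIntegral.continuousOn_primitive_interval' (hInt 0 T le_rfl hT0) left_mem_uIcc
    rw [uIcc_of_le hT0] at hcont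
    have hiv := intermediate_value_Icc hT0 hcont
    have hmem : y ∈ Icc (Wfun w 0) (Wfun w T) := by
      rw [hW0]; exact ⟨hy, hTy⟩
    obtain ⟨s, hs, hsy⟩ := hiv hmem
    exact ⟨s, hs.1, hsy⟩
  -- extract c from the liminf hypothesis
  obtain ⟨r, hr1, hr2⟩ := exists_between hliminf
  have hr0 : 0 < r := lt_of_le_of_lt zero_le hr1
  have hrtop : r ≠ ⊤ := (hr2.trans_le le_top).ne
  set c : ℝ := r.toReal with hcdef
  have hc0 : 0 < c := ENNReal.toReal_pos hr0.ne' hrtop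
  have hc1 : c < 1 := by
    have := (ENNReal.toReal_lt_toReal hrtop (by norm_num)).2 hr2
    simpa using this
  have hfreq : ∃ᶠ x in atTop, ENNReal.ofReal (w x / x) < r :=
    frequently_lt_of_liminf_lt (by isBoundedDefault) hr1
  set ε : ℝ≥0∞ := ENNReal.ofReal ((1 - c) / (2 * c)) with hεdef
  have hε0 : 0 < ε := by
    rw [hεdef]
    apply ENNReal.ofReal_pos.2
    apply div_pos (by linarith) (by linarith)
  have hεtop : ε ≠ ⊤ := ENNReal.ofReal_ne_top
  -- key claim: beyond any point there is an interval contributing at least ε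
  have key : ∀ A : ℝ, 0 ≤ A → ∃ B : ℝ, A ≤ B ∧ ε ≤ ∫⁻ x in Ioc A B, f x := by
    intro A hA
    obtain ⟨x₀, hx₀M, hx₀w⟩ := frequently_atTop.mp hfreq (max (2 * A / (1 - c)) 1)
    have hx₀1 : (1:ℝ) ≤ x₀ := le_trans (le_max_right _ _) hx₀M
    have hx₀pos : 0 < x₀ := lt_of_lt_of_le one_pos hx₀1
    have hwx₀ : w x₀ < c * x₀ := by
      have h1 : w x₀ / x₀ < c :=
        (ENNReal.ofReal_lt_iff_lt_toReal
          (div_nonneg (hpos x₀ hx₀pos.le).le hx₀pos.le) hrtop).1 hx₀w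
      calc w x₀ = (w x₀ / x₀) * x₀ := by field_simp
        _ < c * x₀ := by apply mul_lt_mul_of_pos_right h1 hx₀pos
    have hAx₀ : 2 * A ≤ (1 - c) * x₀ := by
      have h := le_trans (le_max_left _ _) hx₀M
      rw [div_le_iff₀ (by linarith)] at h
      linarith
    set B : ℝ := (1 - c) * x₀ with hBdef
    have hB0 : 0 < B := mul_pos (by linarith) hx₀pos
    have hAB : A ≤ B := by linarith
    have hBx₀ : B ≤ x₀ := by nlinarith
    refine ⟨B, hAB, ?_⟩
    -- pointwise bound on Ioc A B
    have hpt : ∀ x ∈ Ioc A B, ENNReal.ofReal (c * x₀)⁻¹ ≤ f x := by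
      intro x hx
      have hx0 : 0 ≤ x := le_trans hA hx.1.le
      have hxB : x ≤ B := hx.2
      set y : ℝ := Wfun w x + 1 with hydef
      have hy0 : 0 ≤ y := by
        have := hWnonneg x hx0
        simp only [hydef]; linarith
      have hyx₀ : y ≤ Wfun w x₀ := by
        have h1 : (x₀ - x) * (w x₀)⁻¹ ≤ Wfun w x₀ - Wfun w x :=
          hgap x x₀ hx0 (hxB.trans hBx₀)
        have hwx₀pos : 0 < w x₀ := hpos x₀ hx₀pos.le
        have h3 : c * x₀ ≤ x₀ - x := by
          have hxB' : x ≤ (1 - c) * x₀ := hBdef ▸ hxB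
          linarith
        have h2 : (1:ℝ) ≤ (x₀ - x) * (w x₀)⁻¹ := by
          calc (1:ℝ) = (c * x₀) * (c * x₀)⁻¹ := by
                field_simp
            _ ≤ (x₀ - x) * (w x₀)⁻¹ := by
                apply mul_le_mul h3 (inv_anti₀ hwx₀pos hwx₀.le)
                  (inv_nonneg.2 (by positivity)) (by linarith)
        simp only [hydef]; linarith
      obtain ⟨s, hs0, hsy⟩ := hsurj y hy0
      have hWinvy : Winv y = s := by rw [← hsy, hWinv s hs0]
      have hsx₀ : s ≤ x₀ := by
        by_contra hcon
        push_neg at hcon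
        have := hWlt x₀ s hx₀pos.le hcon
        rw [hsy] at this
        linarith
      have hws : w s ≤ w x₀ := hmono hs0 hx₀pos.le hsx₀
      have hwspos : 0 < w s := hpos s hs0
      have hinv : (c * x₀)⁻¹ ≤ (w s)⁻¹ :=
        inv_anti₀ hwspos (hws.trans hwx₀.le)
      simp only [hfdef, ← hydef, hWinvy]
      exact ENNReal.ofReal_le_ofReal hinv
    have hBA : (1 - c) * x₀ / 2 ≤ B - A := by
      rw [hBdef]; linarith
    have heq : (c * x₀)⁻¹ * ((1 - c) * x₀ / 2) = (1 - c) / (2 * c) := by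
      field_simp
    calc ε ≤ ENNReal.ofReal (c * x₀)⁻¹ * volume (Ioc A B) := by
          rw [Real.volume_Ioc, ← ENNReal.ofReal_mul (by positivity), hεdef]
          apply ENNReal.ofReal_le_ofReal
          calc (1 - c) / (2 * c) = (c * x₀)⁻¹ * ((1 - c) * x₀ / 2) := heq.symm
            _ ≤ (c * x₀)⁻¹ * (B - A) :=
                mul_le_mul_of_nonneg_left hBA (by positivity)
      _ = ∫⁻ _ in Ioc A B, ENNReal.ofReal (c * x₀)⁻¹ := (setLIntegral_const _ _).symm
      _ ≤ ∫⁻ x in Ioc A B, f x := setLIntegral_mono' measurableSet_Ioc hpt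
  -- accumulate contributions
  have grow : ∀ n : ℕ, ∃ B : ℝ, 0 ≤ B ∧ (n : ℝ≥0∞) * ε ≤ ∫⁻ x in Ioc (0:ℝ) B, f x := by
    intro n
    induction n with
    | zero => exact ⟨0, le_rfl, by simp⟩
    | succ n ih =>
      obtain ⟨B, hB0, hB⟩ := ih
      obtain ⟨B', hBB', hB'⟩ := key B hB0
      refine ⟨B', hB0.trans hBB', ?_⟩
      have hsplit : ∫⁻ x in Ioc (0:ℝ) B', f x
          = (∫⁻ x in Ioc (0:ℝ) B, f x) + ∫⁻ x in Ioc B B', f x := by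
        rw [← Ioc_union_Ioc_eq_Ioc hB0 hBB', Measure.restrict_union
          (Ioc_disjoint_Ioc_of_le le_rfl) measurableSet_Ioc,
          lintegral_add_measure]
      rw [hsplit]
      push_cast
      rw [add_mul, one_mul]
      exact add_le_add hB hB'
  -- conclude
  have hIa : Ia w Winv 1 = ∫⁻ x in Ioi (0:ℝ), f x := rfl
  by_contra hne
  obtain ⟨n, hn⟩ := ENNReal.exists_nat_gt
    (show Ia w Winv 1 / ε ≠ ⊤ from (ENNReal.div_lt_top hne hε0.ne').ne)
  obtain ⟨B, hB0, hB⟩ := grow n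
  have hle : ∫⁻ x in Ioc (0:ℝ) B, f x ≤ Ia w Winv 1 := by
    rw [hIa]
    exact lintegral_mono' (Measure.restrict_mono Ioc_subset_Ioi_self le_rfl) le_rfl
  have h1 : (n : ℝ≥0∞) * ε ≤ Ia w Winv 1 := le_trans hB hle
  have h2 : Ia w Winv 1 < (n : ℝ≥0∞) * ε :=
    (ENNReal.div_lt_iff (Or.inl hε0.ne') (Or.inl hεtop)).1 hn
  exact absurd h1 (not_le.2 h2)
end
end

section
/- Define w₀(x) = (n!)² for x ∈ [((n-1)!)², (n!)²), n ≥ 1. Then liminf_{x→∞} w₀(x)/x = 1 and α_c(w₀) = 1. -/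
open MeasureTheory Filter Topology Set
open scoped ENNReal NNReal

noncomputable section

namespace Stmt11

def F (n : ℕ) : ℝ := ((Nat.factorial n : ℝ)) ^ 2

lemma one_le_F (n : ℕ) : 1 ≤ F n := by
  have : 1 ≤ (Nat.factorial n : ℝ) := by
    exact_mod_cast Nat.one_le_iff_ne_zero.2 n.factorial_pos.ne'
  unfold F; nlinarith

lemma F_pos (n : ℕ) : 0 < F n := lt_of_lt_of_le one_pos (one_le_F n)

lemma F_succ (n : ℕ) : F (n+1) = ((n:ℝ)+1)^2 * F n := by
  unfold F; rw [Nat.factorial_succ]; push_cast; ring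

lemma F_mono : Monotone F := by
  intro a b h
  unfold F
  have h0 : (Nat.factorial a : ℝ) ≤ Nat.factorial b := by
    exact_mod_cast Nat.factorial_le h
  have h1 : (0:ℝ) ≤ Nat.factorial a := by positivity
  nlinarith

lemma nat_le_F (n : ℕ) : (n:ℝ) ≤ F n := by
  have h1 : (n:ℝ) ≤ (n.factorial : ℝ) := by exact_mod_cast Nat.self_le_factorial n
  have h2 : (1:ℝ) ≤ (n.factorial : ℝ) := by
    exact_mod_cast Nat.one_le_iff_ne_zero.2 n.factorial_pos.ne'
  unfold F; nlinarith

lemma F_add_one_le (n : ℕ) (hn : 1 ≤ n) : F n + 1 ≤ F (n+1) := by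
  have h1 := one_le_F n
  have h2 : (2:ℝ) ≤ (n:ℝ)+1 := by
    have : (1:ℝ) ≤ (n:ℝ) := by exact_mod_cast hn
    linarith
  rw [F_succ]
  nlinarith [mul_le_mul_of_nonneg_right (show (4:ℝ) ≤ ((n:ℝ)+1)^2 by nlinarith)
    (by linarith : (0:ℝ) ≤ F n)]

lemma F_lt_succ (n : ℕ) (hn : 1 ≤ n) : F n < F (n+1) := by
  linarith [F_add_one_le n hn]

lemma F_one : F 1 = 1 := by simp [F, Nat.factorial]

lemma exists_block {x : ℝ} (hx : 1 ≤ x) : ∃ n, F n ≤ x ∧ x < F (n+1) := by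
  classical
  have hex : ∃ m, x < F m := by
    obtain ⟨m, hm⟩ := exists_nat_gt x
    exact ⟨m, lt_of_lt_of_le hm (nat_le_F m)⟩
  have hk : x < F (Nat.find hex) := Nat.find_spec hex
  have hk0 : Nat.find hex ≠ 0 := by
    intro h
    rw [h] at hk
    have : F 0 = 1 := by simp [F, Nat.factorial]
    rw [this] at hk; linarith
  obtain ⟨n, hn⟩ := Nat.exists_eq_succ_of_ne_zero hk0
  refine ⟨n, ?_, by rw [hn] at hk; exact hk⟩
  have := Nat.find_min hex (m := n) (by omega)
  linarith [not_lt.1 this]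

variable {w0 : ℝ → ℝ}

lemma intInv (hpos : ∀ x : ℝ, 0 ≤ x → 0 < w0 x) (hmono : MonotoneOn w0 (Ici (0:ℝ)))
    {a b : ℝ} (ha : 0 ≤ a) (hab : a ≤ b) :
    IntervalIntegrable (fun u => (w0 u)⁻¹) volume a b := by
  rw [intervalIntegrable_iff_integrableOn_Ioc_of_le hab]
  have hsub : volume.restrict (Ioc a b) ≤ volume.restrict (Ici (0:ℝ)) :=
    Measure.restrict_mono (fun x hx => ha.trans hx.1.le) le_rfl
  have hmeas : AEMeasurable w0 (volume.restrict (Ioc a b)) :=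
    (aemeasurable_restrict_of_monotoneOn measurableSet_Ici hmono).mono_measure hsub
  refine ⟨hmeas.inv.aestronglyMeasurable, ?_⟩
  refine HasFiniteIntegral.restrict_of_bounded (C := (w0 0)⁻¹) measure_Ioc_lt_top ?_
  filter_upwards [ae_restrict_mem measurableSet_Ioc] with u hu
  have h0u : (0:ℝ) ≤ u := ha.trans hu.1.le
  rw [Real.norm_eq_abs, abs_of_nonneg (inv_nonneg.2 (hpos u h0u).le)]
  exact inv_anti₀ (hpos 0 le_rfl) (hmono self_mem_Ici h0u h0u)

lemma Wadd (hpos : ∀ x : ℝ, 0 ≤ x → 0 < w0 x) (hmono : MonotoneOn w0 (Ici (0:ℝ)))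
    {a b : ℝ} (ha : 0 ≤ a) (hab : a ≤ b) :
    Wfun w0 b = Wfun w0 a + ∫ u in a..b, (w0 u)⁻¹ := by
  have h := intervalIntegral.integral_add_adjacent_intervals
    (intInv hpos hmono le_rfl ha) (intInv hpos hmono ha hab)
  unfold Wfun
  linarith

lemma Wmono (hpos : ∀ x : ℝ, 0 ≤ x → 0 < w0 x) (hmono : MonotoneOn w0 (Ici (0:ℝ)))
    {a b : ℝ} (ha : 0 ≤ a) (hab : a ≤ b) : Wfun w0 a ≤ Wfun w0 b := by
  rw [Wadd hpos hmono ha hab]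
  have h : 0 ≤ ∫ u in a..b, (w0 u)⁻¹ :=
    intervalIntegral.integral_nonneg hab (fun u hu => inv_nonneg.2 (hpos u (ha.trans hu.1)).le)
  linarith

lemma Wstrict (hpos : ∀ x : ℝ, 0 ≤ x → 0 < w0 x) (hmono : MonotoneOn w0 (Ici (0:ℝ)))
    {a b : ℝ} (ha : 0 ≤ a) (hab : a < b) : Wfun w0 a < Wfun w0 b := by
  rw [Wadd hpos hmono ha hab.le]
  have hb0 : (0:ℝ) < w0 b := hpos b (ha.trans hab.le)
  have key : (b - a) • (w0 b)⁻¹ ≤ ∫ u in a..b, (w0 u)⁻¹ := by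
    rw [← intervalIntegral.integral_const]
    refine intervalIntegral.integral_mono_on hab.le intervalIntegrable_const
      (intInv hpos hmono ha hab.le) ?_
    intro u hu
    exact inv_anti₀ (hpos u (ha.trans hu.1)) (hmono (ha.trans hu.1) (ha.trans hab.le) hu.2)
  have hpos' : 0 < (b - a) • (w0 b)⁻¹ := by
    rw [smul_eq_mul]; have : 0 < b - a := by linarith
    positivity
  linarith [key]

lemma Wzero : Wfun w0 0 = 0 := intervalIntegral.integral_same

lemma Wnonneg (hpos : ∀ x : ℝ, 0 ≤ x → 0 < w0 x) (hmono : MonotoneOn w0 (Ici (0:ℝ)))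
    {a : ℝ} (ha : 0 ≤ a) : 0 ≤ Wfun w0 a := by
  have := Wmono hpos hmono le_rfl ha
  rwa [Wzero] at this

lemma Wcont (hpos : ∀ x : ℝ, 0 ≤ x → 0 < w0 x) (hmono : MonotoneOn w0 (Ici (0:ℝ))) :
    ContinuousOn (Wfun w0) (Ici (0:ℝ)) := by
  have hC : 0 ≤ (w0 0)⁻¹ := inv_nonneg.2 (hpos 0 le_rfl).le
  have key : ∀ x ∈ Ici (0:ℝ), ∀ y ∈ Ici (0:ℝ), y ≤ x →
      dist (Wfun w0 x) (Wfun w0 y) ≤ (w0 0)⁻¹ * dist x y := by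
    intro x hx y hy hyx
    rw [Wadd hpos hmono (mem_Ici.1 hy) hyx, dist_eq_norm, add_sub_cancel_left, Real.dist_eq]
    refine intervalIntegral.norm_integral_le_of_norm_le_const ?_
    intro u hu
    rw [uIoc_of_le hyx] at hu
    have h0u : (0:ℝ) ≤ u := (mem_Ici.1 hy).trans hu.1.le
    rw [Real.norm_eq_abs, abs_of_nonneg (inv_nonneg.2 (hpos u h0u).le)]
    exact inv_anti₀ (hpos 0 le_rfl) (hmono self_mem_Ici h0u h0u)
  have hlip : LipschitzOnWith (Real.toNNReal (w0 0)⁻¹) (Wfun w0) (Ici (0:ℝ)) := by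
    rw [lipschitzOnWith_iff_dist_le_mul]
    intro x hx y hy
    rw [Real.coe_toNNReal _ hC]
    rcases le_total y x with h | h
    · exact key x hx y hy h
    · rw [dist_comm (Wfun w0 x), dist_comm x]
      exact key y hy x hx h
  exact hlip.continuousOn

lemma Wsurj (hpos : ∀ x : ℝ, 0 ≤ x → 0 < w0 x) (hmono : MonotoneOn w0 (Ici (0:ℝ)))
    (hWdiv : Tendsto (Wfun w0) atTop atTop) {y : ℝ} (hy : 0 ≤ y) :
    ∃ t, 0 ≤ t ∧ Wfun w0 t = y := by
  obtain ⟨b, hb1, hb2⟩ := ((hWdiv.eventually_ge_atTop y).and (eventually_ge_atTop (0:ℝ))).exists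
  have hsub : Icc (0:ℝ) b ⊆ Ici 0 := fun t ht => ht.1
  have hmem : y ∈ Icc (Wfun w0 0) (Wfun w0 b) := by
    constructor
    · rw [Wzero]; exact hy
    · exact hb1
  obtain ⟨t, ht, hty⟩ := intermediate_value_Icc hb2 ((Wcont hpos hmono).mono hsub) hmem
  exact ⟨t, ht.1, hty⟩

section Winv

variable (hpos : ∀ x : ℝ, 0 ≤ x → 0 < w0 x) (hmono : MonotoneOn w0 (Ici (0:ℝ)))
    (hWdiv : Tendsto (Wfun w0) atTop atTop) (Winv : ℝ → ℝ)
    (hWinv : ∀ t : ℝ, 0 ≤ t → Winv (Wfun w0 t) = t)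

include hpos hmono hWdiv hWinv

lemma winv_spec {y : ℝ} (hy : 0 ≤ y) : 0 ≤ Winv y ∧ Wfun w0 (Winv y) = y := by
  obtain ⟨t, ht, rfl⟩ := Wsurj hpos hmono hWdiv hy
  rw [hWinv t ht]
  exact ⟨ht, rfl⟩

lemma winv_ge {y t : ℝ} (hy : 0 ≤ y) (ht : 0 ≤ t) (h : Wfun w0 t ≤ y) : t ≤ Winv y := by
  obtain ⟨h1, h2⟩ := winv_spec hpos hmono hWdiv Winv hWinv hy
  by_contra hc
  push_neg at hc
  have := Wstrict hpos hmono h1 hc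
  rw [h2] at this
  linarith

lemma winv_lt {y t : ℝ} (hy : 0 ≤ y) (ht : 0 ≤ t) (h : y < Wfun w0 t) : Winv y < t := by
  obtain ⟨h1, h2⟩ := winv_spec hpos hmono hWdiv Winv hWinv hy
  by_contra hc
  push_neg at hc
  have := Wmono hpos hmono ht hc
  rw [h2] at this
  linarith

end Winv

lemma blockW (hpos : ∀ x : ℝ, 0 ≤ x → 0 < w0 x) (hmono : MonotoneOn w0 (Ici (0:ℝ)))
    (hstepF : ∀ n : ℕ, ∀ x : ℝ, F n ≤ x → x < F (n+1) → w0 x = F (n+1))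
    {n : ℕ} {x : ℝ} (h1 : F n ≤ x) (h2 : x ≤ F (n+1)) :
    Wfun w0 (F (n+1)) = Wfun w0 x + (F (n+1) - x) / F (n+1) := by
  have h0x : (0:ℝ) ≤ x := le_trans (by linarith [one_le_F n]) h1
  rw [Wadd hpos hmono h0x h2]
  congr 1
  have hconst : ∫ u in x..F (n+1), (w0 u)⁻¹ = ∫ u in x..F (n+1), (F (n+1))⁻¹ := by
    rw [intervalIntegral.integral_of_le h2, intervalIntegral.integral_of_le h2]
    refine setIntegral_congr_ae measurableSet_Ioc ?_
    have hae : ∀ᵐ u : ℝ, u ≠ F (n+1) := by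
      refine ae_iff.2 ?_
      simp [Real.volume_singleton]
    filter_upwards [hae] with u hu hmem
    rw [hstepF n u (h1.trans hmem.1.le) (lt_of_le_of_ne hmem.2 hu)]
  rw [hconst, intervalIntegral.integral_const, smul_eq_mul, div_eq_mul_inv]

lemma Ia_fin (hpos : ∀ x : ℝ, 0 ≤ x → 0 < w0 x) (hmono : MonotoneOn w0 (Ici (0:ℝ)))
    (hstepF : ∀ n : ℕ, ∀ x : ℝ, F n ≤ x → x < F (n+1) → w0 x = F (n+1))
    (hWdiv : Tendsto (Wfun w0) atTop atTop) (Winv : ℝ → ℝ)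
    (hWinv : ∀ t : ℝ, 0 ≤ t → Winv (Wfun w0 t) = t)
    {α : ℝ} (hα : 1 ≤ α) : Ia w0 Winv α < ⊤ := by
  set f : ℝ → ℝ≥0∞ := fun x => ENNReal.ofReal (w0 (Winv (Wfun w0 x + α)))⁻¹ with hf
  have hw00 : 0 < w0 0 := hpos 0 le_rfl
  have hglob : ∀ x : ℝ, 0 ≤ x → f x ≤ ENNReal.ofReal (w0 0)⁻¹ := by
    intro x hx
    have hWx := Wnonneg hpos hmono hx
    have hy : 0 ≤ Wfun w0 x + α := by linarith
    obtain ⟨h1, h2⟩ := winv_spec hpos hmono hWdiv Winv hWinv hy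
    exact ENNReal.ofReal_le_ofReal (inv_anti₀ hw00 (hmono self_mem_Ici h1 h1))
  have hblock : ∀ n : ℕ, ∀ x ∈ Ico (F (n+1)) (F (n+2)), f x ≤ ENNReal.ofReal (F (n+3))⁻¹ := by
    intro n x hx
    have h0x : (0:ℝ) ≤ x := le_trans (by linarith [one_le_F (n+1)]) hx.1
    have hWx := Wnonneg hpos hmono h0x
    have hy : 0 ≤ Wfun w0 x + α := by linarith
    have hkey : Wfun w0 (F (n+2)) ≤ Wfun w0 x + α := by
      have hb := blockW hpos hmono hstepF (n := n+1) hx.1 hx.2.le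
      have hd : (F (n+2) - x) / F (n+2) ≤ 1 := by
        rw [div_le_one (F_pos (n+2))]; linarith
      linarith
    have hge : F (n+2) ≤ Winv (Wfun w0 x + α) :=
      winv_ge hpos hmono hWdiv Winv hWinv hy (F_pos (n+2)).le hkey
    have hw : F (n+3) ≤ w0 (Winv (Wfun w0 x + α)) := by
      have hv : w0 (F (n+2)) = F (n+3) := hstepF (n+2) (F (n+2)) le_rfl (F_lt_succ (n+2) (by omega))
      rw [← hv]
      exact hmono (F_pos (n+2)).le ((F_pos (n+2)).le.trans hge) hge
    exact ENNReal.ofReal_le_ofReal (inv_anti₀ (F_pos (n+3)) hw)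
  have cover : Ioi (0:ℝ) ⊆ Ico (0:ℝ) 1 ∪ ⋃ n : ℕ, Ico (F (n+1)) (F (n+2)) := by
    intro x hx
    rcases lt_or_ge x 1 with h | h
    · exact Or.inl ⟨le_of_lt hx, h⟩
    · obtain ⟨n, h1, h2⟩ := exists_block h
      have hn : n ≠ 0 := by
        rintro rfl
        rw [F_one] at h2
        linarith
      obtain ⟨m, rfl⟩ := Nat.exists_eq_succ_of_ne_zero hn
      exact Or.inr (mem_iUnion.2 ⟨m, h1, h2⟩)
  have p1 : (∫⁻ x in Ico (0:ℝ) 1, f x) ≤ ENNReal.ofReal (w0 0)⁻¹ * volume (Ico (0:ℝ) 1) := by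
    rw [← setLIntegral_const]
    refine lintegral_mono_ae ?_
    filter_upwards [ae_restrict_mem measurableSet_Ico] with x hx
    exact hglob x hx.1
  have hsummable : Summable (fun n : ℕ => 1/((n:ℝ)+3)^2) := by
    have := (summable_nat_add_iff (f := fun n : ℕ => 1 / (n:ℝ)^2) 3).2
      (Real.summable_one_div_nat_pow.2 one_lt_two)
    simpa using this
  have p2 : (∫⁻ x in ⋃ n : ℕ, Ico (F (n+1)) (F (n+2)), f x)
      ≤ ∑' n : ℕ, ENNReal.ofReal (1/((n:ℝ)+3)^2) := by
    refine le_trans (lintegral_iUnion_le _ _) (ENNReal.tsum_le_tsum fun n => ?_)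
    calc (∫⁻ x in Ico (F (n+1)) (F (n+2)), f x)
        ≤ ENNReal.ofReal (F (n+3))⁻¹ * volume (Ico (F (n+1)) (F (n+2))) := by
          rw [← setLIntegral_const]
          refine lintegral_mono_ae ?_
          filter_upwards [ae_restrict_mem measurableSet_Ico] with x hx
          exact hblock n x hx
      _ ≤ ENNReal.ofReal (1/((n:ℝ)+3)^2) := by
          rw [Real.volume_Ico, ← ENNReal.ofReal_mul (inv_nonneg.2 (F_pos (n+3)).le)]
          refine ENNReal.ofReal_le_ofReal ?_
          have h1 : F (n+3) = (((n:ℝ)+2)+1)^2 * F (n+2) := by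
            have := F_succ (n+2); push_cast at this ⊢; linarith
          have e1 : (F (n+3))⁻¹ * (F (n+2) - F (n+1)) = (F (n+2) - F (n+1)) / F (n+3) := by
            ring
          rw [e1, h1, div_le_div_iff₀
            (mul_pos (by positivity) (F_pos (n+2)))
            (by positivity : (0:ℝ) < ((n:ℝ)+3)^2)]
          have hF1 := F_pos (n+1)
          nlinarith [sq_nonneg ((n:ℝ)+3), F_pos (n+2), hF1]
  have ptsum : ∑' n : ℕ, ENNReal.ofReal (1/((n:ℝ)+3)^2) < ⊤ := by
    rw [← ENNReal.ofReal_tsum_of_nonneg (fun n => by positivity) hsummable]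
    exact ENNReal.ofReal_lt_top
  have p1' : (∫⁻ x in Ico (0:ℝ) 1, f x) < ⊤ := by
    refine lt_of_le_of_lt p1 ?_
    rw [Real.volume_Ico]
    exact ENNReal.mul_lt_top ENNReal.ofReal_lt_top ENNReal.ofReal_lt_top
  calc Ia w0 Winv α = ∫⁻ x in Ioi (0:ℝ), f x := rfl
    _ ≤ ∫⁻ x in Ico (0:ℝ) 1 ∪ ⋃ n : ℕ, Ico (F (n+1)) (F (n+2)), f x := lintegral_mono_set cover
    _ ≤ (∫⁻ x in Ico (0:ℝ) 1, f x) + ∫⁻ x in ⋃ n : ℕ, Ico (F (n+1)) (F (n+2)), f x :=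
        lintegral_union_le _ _ _
    _ < ⊤ := ENNReal.add_lt_top.2 ⟨p1', lt_of_le_of_lt p2 ptsum⟩

lemma Ia_top (hpos : ∀ x : ℝ, 0 ≤ x → 0 < w0 x) (hmono : MonotoneOn w0 (Ici (0:ℝ)))
    (hstepF : ∀ n : ℕ, ∀ x : ℝ, F n ≤ x → x < F (n+1) → w0 x = F (n+1))
    (hWdiv : Tendsto (Wfun w0) atTop atTop) (Winv : ℝ → ℝ)
    (hWinv : ∀ t : ℝ, 0 ≤ t → Winv (Wfun w0 t) = t)
    {α : ℝ} (hα0 : 0 < α) (hα1 : α < 1) : Ia w0 Winv α = ⊤ := by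
  set f : ℝ → ℝ≥0∞ := fun x => ENNReal.ofReal (w0 (Winv (Wfun w0 x + α)))⁻¹ with hf
  have h1α : 0 < 1 - α := by linarith
  set N : ℕ := ⌈2/(1-α)⌉₊ + 1 with hNdef
  have hNge : ∀ k : ℕ, 2/(1-α) ≤ ((k+N:ℕ):ℝ) := by
    intro k
    have h1 := Nat.le_ceil (2/(1-α))
    have hh : (⌈2/(1-α)⌉₊:ℕ) ≤ k+N := by
      rw [hNdef]; omega
    have h2 : ((⌈2/(1-α)⌉₊:ℕ):ℝ) ≤ ((k+N:ℕ):ℝ) := by exact_mod_cast hh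
    linarith
  have hkey : ∀ k : ℕ, 2 ≤ (1-α) * (((k+N:ℕ):ℝ)+1)^2 := by
    intro k
    have h := hNge k
    have h2 : 2 ≤ (1-α) * ((k+N:ℕ):ℝ) := by
      rw [div_le_iff₀ h1α] at h
      linarith
    have h3 : ((k+N:ℕ):ℝ) ≤ (((k+N:ℕ):ℝ)+1)^2 := by nlinarith [Nat.cast_nonneg (α := ℝ) (k+N)]
    nlinarith
  set J : ℕ → Set ℝ := fun k => Ico (F (k+N)) ((1-α) * F (k+N+1)) with hJ
  have hJsub : ∀ k, J k ⊆ Ico (F (k+N)) (F (k+N+1)) := by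
    intro k x hx
    refine ⟨hx.1, lt_of_lt_of_le hx.2 ?_⟩
    nlinarith [F_pos (k+N+1)]
  have hmeas : ∀ k, MeasurableSet (J k) := fun k => measurableSet_Ico
  have hdisj : Pairwise (Function.onFun Disjoint J) := by
    have key : ∀ k l, k < l → Disjoint (J k) (J l) := by
      intro k l hkl
      refine Set.disjoint_left.2 fun x hxk hxl => ?_
      have h1 : x < F (k+N+1) := (hJsub k hxk).2
      have h2 : F (l+N) ≤ x := hxl.1
      have h3 : F (k+N+1) ≤ F (l+N) := F_mono (by omega)
      linarith
    intro k l hkl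
    rcases hkl.lt_or_gt with h | h
    · exact key k l h
    · exact (key l k h).symm
  have hlow : ∀ k, ∀ x ∈ J k, ENNReal.ofReal (F (k+N+1))⁻¹ ≤ f x := by
    intro k x hx
    have h0x : (0:ℝ) ≤ x := le_trans (by linarith [one_le_F (k+N)]) hx.1
    have hWx := Wnonneg hpos hmono h0x
    have hy : 0 ≤ Wfun w0 x + α := by linarith
    have hwge : x ≤ Winv (Wfun w0 x + α) :=
      winv_ge hpos hmono hWdiv Winv hWinv hy h0x (by linarith)
    have hxlt : x < F (k+N+1) := (hJsub k hx).2
    have hb := blockW hpos hmono hstepF (n := k+N) hx.1 hxlt.le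
    have hfrac : α < (F (k+N+1) - x) / F (k+N+1) := by
      rw [lt_div_iff₀ (F_pos (k+N+1))]
      nlinarith [hx.2]
    have hupper : Wfun w0 x + α < Wfun w0 (F (k+N+1)) := by linarith
    have hwlt : Winv (Wfun w0 x + α) < F (k+N+1) :=
      winv_lt hpos hmono hWdiv Winv hWinv hy (F_pos (k+N+1)).le hupper
    have hval : w0 (Winv (Wfun w0 x + α)) = F (k+N+1) :=
      hstepF (k+N) _ (le_trans hx.1 hwge) hwlt
    show ENNReal.ofReal (F (k+N+1))⁻¹ ≤ ENNReal.ofReal (w0 (Winv (Wfun w0 x + α)))⁻¹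
    rw [hval]
  have hsub0 : (⋃ k, J k) ⊆ Ioi (0:ℝ) := by
    intro x hx
    obtain ⟨k, hk⟩ := mem_iUnion.1 hx
    have h1 : F (k+N) ≤ x := hk.1
    have h2 := one_le_F (k+N)
    show (0:ℝ) < x
    linarith
  have H : ∀ k : ℕ, ENNReal.ofReal ((1-α)/2) ≤ ∫⁻ x in J k, f x := by
    intro k
    have step1 : ENNReal.ofReal (F (k+N+1))⁻¹ * volume (J k) ≤ ∫⁻ x in J k, f x := by
      rw [← setLIntegral_const]
      refine lintegral_mono_ae ?_
      filter_upwards [ae_restrict_mem (hmeas k)] with x hx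
      exact hlow k x hx
    refine le_trans ?_ step1
    have hvol : volume (J k) = ENNReal.ofReal ((1-α) * F (k+N+1) - F (k+N)) := by
      rw [hJ]; exact Real.volume_Ico
    rw [hvol, ← ENNReal.ofReal_mul (inv_nonneg.2 (F_pos (k+N+1)).le)]
    refine ENNReal.ofReal_le_ofReal ?_
    have hF1 := F_pos (k+N+1)
    have hFn := F_pos (k+N)
    have e1 : (F (k+N+1))⁻¹ * ((1-α) * F (k+N+1) - F (k+N)) = (1-α) - F (k+N) / F (k+N+1) := by
      field_simp
    rw [e1]
    have e2 : F (k+N+1) = (((k+N:ℕ):ℝ)+1)^2 * F (k+N) := F_succ (k+N)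
    have h2' : 2/(1-α) ≤ (((k+N:ℕ):ℝ)+1)^2 := by
      rw [div_le_iff₀ h1α]
      nlinarith [hkey k]
    have h2 : 2/(1-α) * F (k+N) ≤ F (k+N+1) := by
      rw [e2]
      exact mul_le_mul_of_nonneg_right h2' hFn.le
    have e3 : (1-α)/2 * (2/(1-α) * F (k+N)) = F (k+N) := by
      field_simp
    have h4 := mul_le_mul_of_nonneg_left h2 (by positivity : (0:ℝ) ≤ (1-α)/2)
    have h3 : F (k+N) / F (k+N+1) ≤ (1-α)/2 := by
      rw [div_le_iff₀ hF1]
      linarith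
    linarith
  have htop : (⊤:ℝ≥0∞) ≤ Ia w0 Winv α := by
    calc (⊤:ℝ≥0∞) = ∑' _ : ℕ, ENNReal.ofReal ((1-α)/2) :=
          (ENNReal.tsum_const_eq_top_of_ne_zero (by
            refine ne_of_gt (ENNReal.ofReal_pos.2 ?_); linarith)).symm
      _ ≤ ∑' k : ℕ, ∫⁻ x in J k, f x := ENNReal.tsum_le_tsum H
      _ = ∫⁻ x in ⋃ k, J k, f x := (lintegral_iUnion hmeas hdisj f).symm
      _ ≤ ∫⁻ x in Ioi (0:ℝ), f x := lintegral_mono_set hsub0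
      _ = Ia w0 Winv α := rfl
  exact top_le_iff.1 htop

end Stmt11

open Stmt11

/-- for the step weight `w₀(x) = (n!)²` on `[((n-1)!)², (n!)²)` (`n ≥ 1`),
one has `liminf_{x→∞} w₀(x)/x = 1` and `α_c(w₀) = 1`. -/
theorem stmt11 (w0 : ℝ → ℝ)
    (hpos : ∀ x : ℝ, 0 ≤ x → 0 < w0 x)
    (hmono : MonotoneOn w0 (Ici (0:ℝ)))
    (hstep : ∀ n : ℕ, 1 ≤ n → ∀ x : ℝ,
        ((Nat.factorial (n - 1) : ℝ)) ^ 2 ≤ x → x < ((Nat.factorial n : ℝ)) ^ 2 →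
        w0 x = ((Nat.factorial n : ℝ)) ^ 2)
    (hWdiv : Tendsto (Wfun w0) atTop atTop)
    (Winv : ℝ → ℝ)
    (hWinv : ∀ t : ℝ, 0 ≤ t → Winv (Wfun w0 t) = t)
    (hWinv' : ∀ y : ℝ, 0 ≤ y → Wfun w0 (Winv y) = y) :
    Filter.liminf (fun x : ℝ => ENNReal.ofReal (w0 x / x)) atTop = 1 ∧
    alphac w0 Winv = 1 := by
  have hstepF : ∀ n : ℕ, ∀ x : ℝ, F n ≤ x → x < F (n+1) → w0 x = F (n+1) := by
    intro n x h1 h2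
    have := hstep (n+1) (by omega) x (by simpa [F, Nat.add_sub_cancel] using h1)
      (by simpa [F] using h2)
    simpa [F] using this
  constructor
  · -- liminf part
    refine le_antisymm ?_ ?_
    · refine le_of_forall_gt_imp_ge_of_dense fun b hb => ?_
      refine Filter.liminf_le_of_frequently_le ?_
      rcases eq_or_ne b ⊤ with rfl | hbne
      · exact Filter.Frequently.of_forall fun x => le_top
      have hb1 : (1:ℝ) < b.toReal := (ENNReal.toReal_lt_toReal (by simp) hbne).2 hb
      set ε : ℝ := b.toReal - 1 with hε
      have hε0 : 0 < ε := by linarith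
      rw [frequently_atTop]
      intro M
      set n : ℕ := ⌈max M (1/ε)⌉₊ + 1 with hn
      have hn1 : 1 ≤ n := by omega
      have hnM : max M (1/ε) ≤ (n:ℝ) := by
        have h1 := Nat.le_ceil (max M (1/ε))
        have h2 : ((⌈max M (1/ε)⌉₊:ℕ):ℝ) ≤ (n:ℝ) := by
          exact_mod_cast (by rw [hn]; omega : ⌈max M (1/ε)⌉₊ ≤ n)
        linarith
      have hFn : (n:ℝ) ≤ F n := nat_le_F n
      have hF1 : F n + 1 ≤ F (n+1) := F_add_one_le n hn1
      have hMn : M ≤ (n:ℝ) := le_trans (le_max_left M (1/ε)) hnM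
      have hεn : 1/ε ≤ (n:ℝ) := le_trans (le_max_right M (1/ε)) hnM
      refine ⟨F (n+1) - 1, by linarith, ?_⟩
      have hx1 : F n ≤ F (n+1) - 1 := by linarith
      have hx2 : F (n+1) - 1 < F (n+1) := by linarith
      have hw : w0 (F (n+1) - 1) = F (n+1) := hstepF n _ hx1 hx2
      have hxpos : 0 < F (n+1) - 1 := by linarith [one_le_F n]
      have hquot : F (n+1) / (F (n+1) - 1) ≤ 1 + ε := by
        rw [div_le_iff₀ hxpos]
        have hF : 1 + 1/ε ≤ F (n+1) := by linarith
        have hm := mul_le_mul_of_nonneg_left hF hε0.le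
        have e : ε * (1 + 1/ε) = ε + 1 := by field_simp
        nlinarith
      have heq : 1 + ε = b.toReal := by rw [hε]; ring
      rw [hw]
      calc ENNReal.ofReal (F (n+1) / (F (n+1) - 1)) ≤ ENNReal.ofReal (1+ε) :=
            ENNReal.ofReal_le_ofReal hquot
        _ = b := by rw [heq, ENNReal.ofReal_toReal hbne]
    · refine Filter.le_liminf_of_le (by isBoundedDefault) ?_
      filter_upwards [eventually_ge_atTop (1:ℝ)] with x hx
      obtain ⟨n, h1, h2⟩ := exists_block hx
      have hw : w0 x = F (n+1) := hstepF n x h1 h2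
      have hx0 : (0:ℝ) < x := lt_of_lt_of_le one_pos hx
      refine ENNReal.one_le_ofReal.2 ?_
      rw [hw, le_div_iff₀ hx0, one_mul]
      exact h2.le
  · -- alphac part
    refine le_antisymm ?_ ?_
    · refine le_of_forall_gt_imp_ge_of_dense fun b hb => ?_
      rcases eq_or_ne b ⊤ with rfl | hbne
      · exact le_top
      have hb1 : (1:ℝ) < b.toReal := (ENNReal.toReal_lt_toReal (by simp) hbne).2 hb
      set α : ℝ := min b.toReal 2 with hα
      have hα1 : 1 < α := lt_min hb1 one_lt_two
      have hfin : Ia w0 Winv α < ⊤ := Ia_fin hpos hmono hstepF hWdiv Winv hWinv hα1.le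
      have hmem : ENNReal.ofReal α ∈ ENNReal.ofReal '' {α : ℝ | 0 < α ∧ Ia w0 Winv α < ⊤} :=
        ⟨α, ⟨by linarith, hfin⟩, rfl⟩
      refine le_trans (sInf_le hmem) ?_
      calc ENNReal.ofReal α ≤ ENNReal.ofReal b.toReal :=
            ENNReal.ofReal_le_ofReal (min_le_left _ _)
        _ = b := ENNReal.ofReal_toReal hbne
    · refine le_sInf ?_
      rintro b ⟨α, ⟨hα0, hfin⟩, rfl⟩
      have h1 : 1 ≤ α := by
        by_contra hc
        push_neg at hc
        rw [Ia_top hpos hmono hstepF hWdiv Winv hWinv hα0 hc] at hfin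
        exact absurd hfin (lt_irrefl ⊤)
      exact ENNReal.one_le_ofReal.2 h1
end
end
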